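/- Let p > 1, γ > 0, and δ_γ = γ^{(p−1)/p}/p^{1/p}. The function j : ℝ → ℝ defined by j(z) = δ_γ|z| − (|z| + (1/γ)(1−p)/p)^{1/p} if |z| > 1/γ and j(z) = 0 if |z| ≤ 1/γ is convex on ℝ. -/

import Mathlib

/-- `δ_γ = γ^{(p-1)/p} / p^{1/p}`. -/
noncomputable def deltaGamma (p γ : ℝ) : ℝ := γ ^ ((p - 1)/p) / p ^ ((1:ℝ)/p)

/-- The DC-component `j`. -/
noncomputable def jfun (p γ z : ℝ) : ℝ :=
  if |z| ≤ 1/γ then 0 else deltaGamma p γ * |z| - (|z| + (1/γ) * ((1 - p)/p)) ^ ((1:ℝ)/p)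

theorem stmt_7 (p γ : ℝ) (hp : 1 < p) (hγ : 0 < γ) :
    ConvexOn ℝ Set.univ (jfun p γ) := by
  have hp0 : (0:ℝ) < p := lt_trans one_pos hp
  have hp0' : p ≠ 0 := hp0.ne'
  have hγ' : γ ≠ 0 := hγ.ne'
  set a : ℝ := 1/γ with ha
  set c : ℝ := (1/γ) * ((1 - p)/p) with hc
  set b : ℝ := (p*γ)⁻¹ with hb
  have hbpos : 0 < b := by rw [hb]; positivity
  have hac : a + c = b := by
    rw [ha, hc, hb]; field_simp; ring
  set δ : ℝ := deltaGamma p γ with hδdef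
  have e3 : b ^ ((1:ℝ)/p) = p ^ (-((1:ℝ)/p)) * γ ^ (-((1:ℝ)/p)) := by
    rw [hb, ← Real.rpow_neg_one (p*γ),
        ← Real.rpow_mul (by positivity : (0:ℝ) ≤ p*γ),
        show (-1:ℝ) * ((1:ℝ)/p) = -((1:ℝ)/p) by ring,
        Real.mul_rpow hp0.le hγ.le]
  have e4 : γ ^ (-((1:ℝ)/p)) * γ = γ ^ ((p-1)/p) := by
    nth_rewrite 2 [← Real.rpow_one γ]
    rw [← Real.rpow_add hγ]
    congr 1
    field_simp
    ring
  have hkey : δ = b ^ ((1:ℝ)/p) * γ := by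
    rw [e3, mul_assoc, e4, hδdef, deltaGamma, Real.rpow_neg hp0.le, div_eq_mul_inv]
    ring
  have hbinv : b⁻¹ = p * γ := by rw [hb, inv_inv]
  have hδ : δ = 1/p * b ^ ((1:ℝ)/p - 1) := by
    rw [show (1:ℝ)/p - 1 = (1:ℝ)/p + (-1) by ring, Real.rpow_add hbpos,
        Real.rpow_neg_one, hbinv, hkey]
    field_simp
  have hga : δ * a = b ^ ((1:ℝ)/p) := by
    rw [hkey, ha]
    field_simp
  set g : ℝ → ℝ := fun t => δ * t - (t + c) ^ ((1:ℝ)/p) with hgdef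
  set G : ℝ → ℝ := fun t => δ - 1/p * (t + c) ^ ((1:ℝ)/p - 1) with hGdef
  have hgderiv : ∀ t, a ≤ t → HasDerivAt g (G t) t := by
    intro t ht
    have htb : b ≤ t + c := by rw [← hac]; linarith
    have htc : 0 < t + c := lt_of_lt_of_le hbpos htb
    have h1 : HasDerivAt (fun s : ℝ => s + c) 1 t := (hasDerivAt_id t).add_const c
    have h2 := h1.rpow_const (p := (1:ℝ)/p) (Or.inl htc.ne')
    have h3 : HasDerivAt (fun s : ℝ => δ * s) δ t := by
      simpa using (hasDerivAt_id t).const_mul δ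
    have h4 := h3.sub h2
    convert h4 using 1
    show δ - 1/p * (t + c) ^ ((1:ℝ)/p - 1) = δ - 1 * ((1:ℝ)/p) * (t + c) ^ ((1:ℝ)/p - 1)
    ring
    all_goals rfl
  have hGa : G a = 0 := by
    show δ - 1/p * (a + c) ^ ((1:ℝ)/p - 1) = 0
    rw [hac, ← hδ, sub_self]
  have hg0 : g a = 0 := by
    show δ * a - (a + c) ^ ((1:ℝ)/p) = 0
    rw [hac, hga, sub_self]
  set f : ℝ → ℝ := fun t => if t ≤ a then 0 else g t with hfdef
  set F : ℝ → ℝ := fun t => if t ≤ a then 0 else G t with hFdef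
  have hfderiv : ∀ t, HasDerivAt f (F t) t := by
    intro t
    rcases lt_trichotomy t a with h | h | h
    · have hev : f =ᶠ[nhds t] fun _ => 0 := by
        filter_upwards [Iio_mem_nhds h] with s hs
        simp only [hfdef, if_pos (le_of_lt (Set.mem_Iio.mp hs))]
      have hd : HasDerivAt f 0 t := (hasDerivAt_const t 0).congr_of_eventuallyEq hev
      have : F t = 0 := by simp only [hFdef, if_pos h.le]
      rw [this]; exact hd
    · rw [h]
      have hlo : (fun s => g s) =o[nhds a] fun s => s - a := by
        have h0 := hasDerivAt_iff_isLittleO.mp (hgderiv a le_rfl)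
        simpa [hg0, hGa] using h0
      have hO : (fun s => f s) =O[nhds a] fun s => g s := by
        apply Asymptotics.isBigO_of_le
        intro s
        by_cases hs : s ≤ a
        · simp only [hfdef, if_pos hs, norm_zero]
          exact norm_nonneg _
        · simp only [hfdef, if_neg hs, le_refl]
      have hd : HasDerivAt f 0 a := by
        rw [hasDerivAt_iff_isLittleO]
        have hf0 : f a = 0 := by simp only [hfdef, if_pos le_rfl]
        simpa [hf0] using hO.trans_isLittleO hlo
      have : F a = 0 := by simp only [hFdef, if_pos le_rfl]
      rw [this]; exact hd
    · have hev : f =ᶠ[nhds t] g := by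
        filter_upwards [Ioi_mem_nhds h] with s hs
        simp only [hfdef, if_neg (not_le.mpr (Set.mem_Ioi.mp hs))]
      have hd : HasDerivAt f (G t) t := (hgderiv t h.le).congr_of_eventuallyEq hev
      have : F t = G t := by simp only [hFdef, if_neg (not_le.mpr h)]
      rw [this]; exact hd
  have hGmono : ∀ s t, a ≤ s → s ≤ t → G s ≤ G t := by
    intro s t hs hst
    have hsb : b ≤ s + c := by rw [← hac]; linarith
    have hsc : 0 < s + c := lt_of_lt_of_le hbpos hsb
    have hexp : (1:ℝ)/p - 1 ≤ 0 := by
      have : (1:ℝ)/p < 1 := by rw [div_lt_one hp0]; exact hp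
      linarith
    have hle : (t + c) ^ ((1:ℝ)/p - 1) ≤ (s + c) ^ ((1:ℝ)/p - 1) :=
      Real.rpow_le_rpow_of_nonpos hsc (by linarith) hexp
    show δ - 1/p * (s + c) ^ ((1:ℝ)/p - 1) ≤ δ - 1/p * (t + c) ^ ((1:ℝ)/p - 1)
    have h1p : (0:ℝ) ≤ 1/p := by positivity
    nlinarith
  have hGnonneg : ∀ t, a ≤ t → 0 ≤ G t := by
    intro t ht
    rw [← hGa]
    exact hGmono a t le_rfl ht
  have hFmono : Monotone F := by
    intro s t hst
    by_cases hs : s ≤ a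
    · by_cases ht : t ≤ a
      · simp only [hFdef, if_pos hs, if_pos ht, le_refl]
      · simp only [hFdef, if_pos hs, if_neg ht]
        exact hGnonneg t (le_of_not_ge ht)
    · have ht : ¬ t ≤ a := fun h => hs (hst.trans h)
      simp only [hFdef, if_neg hs, if_neg ht]
      exact hGmono s t (le_of_not_ge hs) hst
  have hFnonneg : ∀ t, 0 ≤ F t := by
    intro t
    by_cases ht : t ≤ a
    · simp only [hFdef, if_pos ht, le_refl]
    · simp only [hFdef, if_neg ht]
      exact hGnonneg t (le_of_not_ge ht)
  have hdiff : Differentiable ℝ f := fun t => (hfderiv t).differentiableAt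
  have hderiv : deriv f = F := funext fun t => (hfderiv t).deriv
  have hfconv : ConvexOn ℝ Set.univ f :=
    Monotone.convexOn_univ_of_deriv hdiff (by rw [hderiv]; exact hFmono)
  have hfmono : Monotone f :=
    monotone_of_deriv_nonneg hdiff (by rw [hderiv]; exact hFnonneg)
  have habs : ConvexOn ℝ Set.univ (fun z : ℝ => |z|) := by
    exact convexOn_univ_norm (E := ℝ)
  have himg : (fun z : ℝ => |z|) '' Set.univ = Set.Ici (0:ℝ) := by
    ext x
    simp only [Set.image_univ, Set.mem_range, Set.mem_Ici]
    constructor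
    · rintro ⟨y, rfl⟩; exact abs_nonneg y
    · intro hx; exact ⟨x, abs_of_nonneg hx⟩
  have h1 : ConvexOn ℝ ((fun z : ℝ => |z|) '' Set.univ) f := by
    rw [himg]
    exact hfconv.subset (Set.subset_univ _) (convex_Ici 0)
  have h2 : MonotoneOn f ((fun z : ℝ => |z|) '' Set.univ) := hfmono.monotoneOn _
  have hcomp : ConvexOn ℝ Set.univ (f ∘ fun z : ℝ => |z|) := ConvexOn.comp h1 habs h2
  have hjf : jfun p γ = f ∘ fun z : ℝ => |z| := by
    funext z
    show jfun p γ z = f |z|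
    simp only [jfun, hfdef, hgdef, hδdef, ha, hc]
  rw [hjf]
  exact hcomp
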